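/- For t ∈ F_q and m ∈ M₂(F_q), the Fourier transform of the indicator of D_t = {x : det x = t}, defined by \hat{D_t}(m) = q⁻⁴ Σ_{x: det x = t} χ(−m·x) with the standard dot product on F_q⁴, equals δ₀(m)/q + q⁻³ Σ_{s ≠ 0} χ(−s t − det(m)/s). -/

import Mathlib

open Finset

section helpers
variable {F : Type*} [Field F] [Fintype F] [DecidableEq F]

private lemma lemA (χ : AddChar F ℂ) (hχ : χ ≠ 1) (b : F) :
    ∑ a : F, χ (a * b) = if b = 0 then (Fintype.card F : ℂ) else 0 := by
  rw [AddChar.sum_mulShift b (AddChar.IsPrimitive.of_ne_one hχ)]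
  split_ifs <;> simp

private lemma pairlem (χ : AddChar F ℂ) (hχ : χ ≠ 1) {s : F} (hs : s ≠ 0) (α β : F) :
    ∑ a : F, ∑ d : F, χ (s * (a * d) + α * a + β * d)
      = (Fintype.card F : ℂ) * χ (β * (-α / s)) := by
  rw [Finset.sum_comm]
  have h1 : ∀ d : F, ∑ a : F, χ (s * (a * d) + α * a + β * d)
      = χ (β * d) * ∑ a : F, χ (a * (s * d + α)) := by
    intro d
    rw [Finset.mul_sum]
    refine Finset.sum_congr rfl fun a _ => ?_
    rw [← AddChar.map_add_eq_mul]
    congr 1; ring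
  simp_rw [h1, lemA χ hχ]
  rw [Finset.sum_eq_single (-α / s)]
  · rw [if_pos (by field_simp; ring), mul_comm]
  · intro d _ hd
    rw [if_neg, mul_zero]
    intro h; apply hd; field_simp at h ⊢; linear_combination h
  · intro h; exact absurd (Finset.mem_univ _) h

private def matEquiv (F : Type*) : (F × F × F × F) ≃ Matrix (Fin 2) (Fin 2) F where
  toFun p := !![p.1, p.2.1; p.2.2.1, p.2.2.2]
  invFun M := (M 0 0, M 0 1, M 1 0, M 1 1)
  left_inv p := by simp
  right_inv M := (Matrix.eta_fin_two M).symm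

private lemma sum_matrix (g : Matrix (Fin 2) (Fin 2) F → ℂ) :
    ∑ x : Matrix (Fin 2) (Fin 2) F, g x
      = ∑ a : F, ∑ b : F, ∑ c : F, ∑ d : F, g !![a, b; c, d] := by
  rw [← Equiv.sum_comp (matEquiv F) g]
  simp [Fintype.sum_prod_type, matEquiv]

private lemma Sne (χ : AddChar F ℂ) (hχ : χ ≠ 1) (m : Matrix (Fin 2) (Fin 2) F)
    {s : F} (hs : s ≠ 0) :
    ∑ x : Matrix (Fin 2) (Fin 2) F,
        χ (s * x.det - (m 0 0 * x 0 0 + m 0 1 * x 0 1 + (m 1 0 * x 1 0 + m 1 1 * x 1 1)))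
      = (Fintype.card F : ℂ) ^ 2 * χ (- m.det / s) := by
  rw [sum_matrix]
  have key : ∀ a b c d : F,
      χ (s * (!![a, b; c, d] : Matrix (Fin 2) (Fin 2) F).det
          - (m 0 0 * a + m 0 1 * b + (m 1 0 * c + m 1 1 * d)))
        = χ (s * (a * d) + (-(m 0 0)) * a + (-(m 1 1)) * d)
          * χ ((-s) * (b * c) + (-(m 0 1)) * b + (-(m 1 0)) * c) := by
    intro a b c d
    rw [← AddChar.map_add_eq_mul, Matrix.det_fin_two_of]
    congr 1; ring
  simp only [Matrix.of_apply, Matrix.cons_val', Matrix.cons_val_zero, Matrix.cons_val_one,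
    Matrix.head_cons, Matrix.head_fin_const, Matrix.empty_val', Matrix.cons_val_fin_one]
  simp_rw [key]
  simp_rw [← Finset.sum_mul, ← Finset.mul_sum]
  rw [← Finset.sum_mul]
  rw [pairlem χ hχ hs, pairlem χ hχ (neg_ne_zero.mpr hs)]
  rw [mul_mul_mul_comm, ← AddChar.map_add_eq_mul]
  rw [sq]
  refine congrArg (fun z => _ * z) (congrArg χ ?_)
  rw [Matrix.det_fin_two]
  field_simp
  ring

private lemma Szero (χ : AddChar F ℂ) (hχ : χ ≠ 1) (m : Matrix (Fin 2) (Fin 2) F) :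
    ∑ x : Matrix (Fin 2) (Fin 2) F,
        χ (-(m 0 0 * x 0 0 + m 0 1 * x 0 1 + (m 1 0 * x 1 0 + m 1 1 * x 1 1)))
      = (Fintype.card F : ℂ) ^ 4 * (if m = 0 then 1 else 0) := by
  rw [sum_matrix]
  have key : ∀ a b c d : F,
      χ (-(m 0 0 * a + m 0 1 * b + (m 1 0 * c + m 1 1 * d)))
        = χ (a * (-(m 0 0))) * (χ (b * (-(m 0 1))) * (χ (c * (-(m 1 0))) * χ (d * (-(m 1 1))))) := by
    intro a b c d
    rw [← AddChar.map_add_eq_mul, ← AddChar.map_add_eq_mul, ← AddChar.map_add_eq_mul]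
    congr 1; ring
  simp only [Matrix.of_apply, Matrix.cons_val', Matrix.cons_val_zero, Matrix.cons_val_one,
    Matrix.head_cons, Matrix.head_fin_const, Matrix.empty_val', Matrix.cons_val_fin_one]
  simp_rw [key, ← Finset.mul_sum, ← Finset.sum_mul, lemA χ hχ, neg_eq_zero]
  have hm : m = 0 ↔ (m 0 0 = 0 ∧ m 0 1 = 0 ∧ m 1 0 = 0 ∧ m 1 1 = 0) := by
    constructor
    · intro h; simp [h]
    · rintro ⟨h1, h2, h3, h4⟩
      rw [Matrix.eta_fin_two m, h1, h2, h3, h4]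
      ext i j; fin_cases i <;> fin_cases j <;> simp
  by_cases h : m = 0
  · obtain ⟨h1, h2, h3, h4⟩ := hm.mp h
    rw [if_pos h, if_pos h1, if_pos h2, if_pos h3, if_pos h4]; ring
  · rw [if_neg h]
    rw [hm] at h
    push_neg at h
    by_cases h1 : m 0 0 = 0
    · by_cases h2 : m 0 1 = 0
      · by_cases h3 : m 1 0 = 0
        · rw [if_neg (h h1 h2 h3)]; ring
        · rw [if_neg h3]; ring
      · rw [if_neg h2]; ring
    · rw [if_neg h1]; ring

end helpers

theorem stmt_7 {F : Type*} [Field F] [Fintype F] [DecidableEq F]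
    (χ : AddChar F ℂ) (hχ : χ ≠ 1) (t : F) (m : Matrix (Fin 2) (Fin 2) F) :
    ((Fintype.card F : ℂ)) ⁻¹ ^ 4 *
        ∑ x ∈ Finset.univ.filter (fun x : Matrix (Fin 2) (Fin 2) F => x.det = t),
          χ (-(∑ a : Fin 2, ∑ b : Fin 2, m a b * x a b)) =
      (if m = 0 then 1 else 0) / (Fintype.card F : ℂ) +
        ((Fintype.card F : ℂ))⁻¹ ^ 3 *
          ∑ s ∈ Finset.univ \ {0}, χ (-(s * t) - m.det / s) := by
  have hq : (Fintype.card F : ℂ) ≠ 0 := Nat.cast_ne_zero.mpr Fintype.card_ne_zero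
  set q : ℂ := (Fintype.card F : ℂ) with hqdef
  simp_rw [Fin.sum_univ_two]
  set M : Matrix (Fin 2) (Fin 2) F → F :=
    fun x => m 0 0 * x 0 0 + m 0 1 * x 0 1 + (m 1 0 * x 1 0 + m 1 1 * x 1 1) with hM
  -- Step 1 : insert the character-sum indicator of `det x = t`
  have step1 :
      (q : ℂ) * ∑ x ∈ Finset.univ.filter (fun x : Matrix (Fin 2) (Fin 2) F => x.det = t),
          χ (-(M x))
        = ∑ s : F, χ (-(s * t)) * ∑ x : Matrix (Fin 2) (Fin 2) F, χ (s * x.det - M x) := by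
    have e1 : ∀ s : F, χ (-(s * t)) * ∑ x : Matrix (Fin 2) (Fin 2) F, χ (s * x.det - M x)
        = ∑ x : Matrix (Fin 2) (Fin 2) F, χ (s * (x.det - t)) * χ (-(M x)) := by
      intro s
      rw [Finset.mul_sum]
      refine Finset.sum_congr rfl fun x _ => ?_
      rw [← AddChar.map_add_eq_mul, ← AddChar.map_add_eq_mul]
      congr 1; ring
    simp_rw [e1]
    rw [Finset.sum_comm]
    have e2 : ∀ x : Matrix (Fin 2) (Fin 2) F,
        ∑ s : F, χ (s * (x.det - t)) * χ (-(M x))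
          = (if x.det = t then q else 0) * χ (-(M x)) := by
      intro x
      rw [← Finset.sum_mul, lemA χ hχ]
      simp [sub_eq_zero, hqdef]
    simp_rw [e2, ite_mul, zero_mul, ← Finset.sum_filter, Finset.mul_sum]
  -- Step 2 : evaluate the `s = 0` term and the `s ≠ 0` terms
  have split : ∑ s : F, χ (-(s * t)) * ∑ x : Matrix (Fin 2) (Fin 2) F, χ (s * x.det - M x)
      = (∑ s ∈ Finset.univ \ {0}, χ (-(s * t))
            * ∑ x : Matrix (Fin 2) (Fin 2) F, χ (s * x.det - M x))
        + q ^ 4 * (if m = 0 then 1 else 0) := by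
    rw [← Finset.sum_sdiff (Finset.subset_univ {0})]
    congr 1
    rw [Finset.sum_singleton]
    simp only [zero_mul, neg_zero, AddChar.map_zero_eq_one, one_mul, zero_sub]
    simp_rw [hM]
    exact Szero χ hχ m
  have step3 : ∀ s ∈ Finset.univ \ ({0} : Finset F),
      χ (-(s * t)) * ∑ x : Matrix (Fin 2) (Fin 2) F, χ (s * x.det - M x)
        = q ^ 2 * χ (-(s * t) - m.det / s) := by
    intro s hs
    have hs0 : s ≠ 0 := by simpa using (Finset.mem_sdiff.mp hs).2
    simp only [hM]
    rw [Sne χ hχ m hs0, mul_left_comm, ← AddChar.map_add_eq_mul]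
    congr 2
    rw [neg_div]; ring
  have key : q * ∑ x ∈ Finset.univ.filter (fun x : Matrix (Fin 2) (Fin 2) F => x.det = t),
        χ (-(M x))
      = q ^ 2 * (∑ s ∈ Finset.univ \ {0}, χ (-(s * t) - m.det / s))
        + q ^ 4 * (if m = 0 then 1 else 0) := by
    rw [step1, split, Finset.sum_congr rfl step3, ← Finset.mul_sum]
  have hSum : ∑ x ∈ Finset.univ.filter (fun x : Matrix (Fin 2) (Fin 2) F => x.det = t),
        χ (-(M x))
      = q * (∑ s ∈ Finset.univ \ {0}, χ (-(s * t) - m.det / s))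
        + q ^ 3 * (if m = 0 then 1 else 0) := by
    apply mul_left_cancel₀ hq
    rw [key]; ring
  rw [hSum]
  generalize (∑ s ∈ Finset.univ \ {0}, χ (-(s * t) - m.det / s)) = S
  field_simp
  ring
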